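/- Let δ > 0 and let h_δ : [0, 2π) → ℝ be defined by h_δ(θ) = (1/(2π)) · (Γ(1+δ)²/Γ(1+2δ)) · (1 − e^{-iθ})^δ (1 − e^{iθ})^δ (which is real-valued and nonnegative). Then for each integer k ≥ 0, the k-th Fourier coefficient of h_δ equals a_k = (1/(2π)) · (-δ)^{↑k} / (1+δ)^{↑k}. -/

import Mathlib

open Finset Real Complex

/-- Rising factorial (Pochhammer symbol): `x^{↑k} = x(x+1)⋯(x+k-1)`. -/
noncomputable def risingFac (x : ℝ) (k : ℕ) : ℝ := ∏ j ∈ Finset.range k, (x + j)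

/-- The density `h_δ` (as a complex-valued function, it is in fact real and nonnegative):
`h_δ(θ) = (1/(2π)) (Γ(1+δ)²/Γ(1+2δ)) (1-e^{-iθ})^δ (1-e^{iθ})^δ`, principal branch powers. -/
noncomputable def hDens (δ : ℝ) (θ : ℝ) : ℂ :=
  (1 / (2 * Real.pi)) * (Real.Gamma (1 + δ) ^ 2 / Real.Gamma (1 + 2 * δ)) *
    ((1 - Complex.exp (-(Complex.I * θ))) ^ (δ : ℂ)) *
    ((1 - Complex.exp (Complex.I * θ)) ^ (δ : ℂ))

open MeasureTheory intervalIntegral Set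

noncomputable def uFun (δ : ℝ) (θ : ℝ) : ℝ := (2 - 2 * Real.cos θ) ^ δ


lemma stepA (δ : ℝ) (θ : ℝ) :
    ((1 - Complex.exp (-(Complex.I * θ))) ^ (δ : ℂ)) *
      ((1 - Complex.exp (Complex.I * θ)) ^ (δ : ℂ)) = ((uFun δ θ : ℝ) : ℂ) := by
  set z : ℂ := 1 - Complex.exp (Complex.I * θ) with hz
  have hconj : (starRingEnd ℂ) z = 1 - Complex.exp (-(Complex.I * θ)) := by
    simp [hz, ← Complex.exp_conj, map_mul, Complex.conj_I]
  have hre : z.re = 1 - Real.cos θ := by simp [hz, Complex.exp_re]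
  have him : z.im = - Real.sin θ := by simp [hz, Complex.exp_im]
  have harg : z.arg ≠ Real.pi := by
    intro h
    have := (Complex.arg_eq_pi_iff.mp h).1
    rw [hre] at this
    linarith [Real.cos_le_one θ]
  have h1 : (1 - Complex.exp (-(Complex.I * θ))) ^ (δ : ℂ)
      = (starRingEnd ℂ) (z ^ (δ : ℂ)) := by
    rw [← hconj, Complex.conj_cpow _ _ harg]
    norm_num
  have habs : ‖z‖ ^ (2:ℕ) = 2 - 2 * Real.cos θ := by
    rw [Complex.sq_norm, Complex.normSq_apply, hre, him]
    nlinarith [Real.sin_sq_add_cos_sq θ]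
  rw [h1, Complex.conj_mul', Complex.norm_cpow_real]
  rw [show ((‖z‖ ^ δ : ℝ) : ℂ) ^ (2:ℕ) = (((‖z‖ ^ δ)^(2:ℕ) : ℝ) : ℂ) by push_cast; ring]
  congr 1
  rw [← Real.rpow_natCast (‖z‖ ^ δ) 2, ← Real.rpow_mul (norm_nonneg z),
    mul_comm, Real.rpow_mul (norm_nonneg z), Real.rpow_natCast, habs]
  rfl



lemma two_sub_cos_eq (θ : ℝ) : 2 - 2 * Real.cos θ = 4 * Real.sin (θ/2) ^ 2 := by
  have h1 := Real.sin_sq_add_cos_sq (θ/2)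
  have h2 := Real.cos_two_mul (θ/2)
  have h3 : Real.cos θ = Real.cos (2 * (θ/2)) := by ring_nf
  rw [h3, h2]; nlinarith

lemma two_sub_cos_pos {θ : ℝ} (h1 : 0 < θ) (h2 : θ < 2 * Real.pi) :
    0 < 2 - 2 * Real.cos θ := by
  rw [two_sub_cos_eq]
  have : 0 < Real.sin (θ/2) := Real.sin_pos_of_pos_of_lt_pi (by linarith) (by linarith)
  positivity

lemma uFun_continuous (δ : ℝ) (hδ : 0 < δ) : Continuous (uFun δ) := by
  apply Continuous.rpow_const (by continuity)
  intro x; right; exact hδ.le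

lemma uFun_hasDerivAt (δ : ℝ) {θ : ℝ} (h1 : 0 < θ) (h2 : θ < 2 * Real.pi) :
    HasDerivAt (uFun δ) (δ * (2 - 2 * Real.cos θ) ^ (δ - 1) * (2 * Real.sin θ)) θ := by
  have hv : HasDerivAt (fun θ : ℝ => 2 - 2 * Real.cos θ) (2 * Real.sin θ) θ := by
    simpa using ((Real.hasDerivAt_cos θ).const_mul 2).const_sub 2
  have hp : HasDerivAt (fun x : ℝ => x ^ δ) (δ * (2 - 2 * Real.cos θ) ^ (δ - 1))
      (2 - 2 * Real.cos θ) :=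
    Real.hasDerivAt_rpow_const (Or.inl (two_sub_cos_pos h1 h2).ne')
  exact hp.comp θ hv

lemma key_exp_id (θ : ℝ) :
    2 * (Real.sin θ : ℂ) * (1 - Complex.exp (-(Complex.I * θ)))
      = Complex.I * ((2 : ℂ) - 2 * (Real.cos θ : ℂ)) * (1 + Complex.exp (-(Complex.I * θ))) := by
  have h : ((Real.sin θ : ℂ))^2 + ((Real.cos θ : ℂ))^2 = 1 := by
    exact_mod_cast Real.sin_sq_add_cos_sq θ
  rw [show -(Complex.I * (θ:ℂ)) = ((-θ : ℝ) : ℂ) * Complex.I by push_cast; ring,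
    Complex.exp_mul_I]
  simp only [Complex.ofReal_neg, Complex.cos_neg, Complex.sin_neg, ← Complex.ofReal_cos,
    ← Complex.ofReal_sin]
  linear_combination (2*Complex.I) * h + (2*(Real.sin θ:ℂ) - 2*(Real.sin θ:ℂ)*(Real.cos θ:ℂ))*Complex.I_sq

lemma expDeriv (m : ℂ) (θ : ℝ) :
    HasDerivAt (fun t : ℝ => Complex.exp (-(Complex.I * m * t)))
      (-(Complex.I * m) * Complex.exp (-(Complex.I * m * θ))) θ := by
  have h : HasDerivAt (fun z : ℂ => Complex.exp (-(Complex.I * m) * z))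
      (-(Complex.I * m) * Complex.exp (-(Complex.I * m) * (θ:ℂ))) (θ:ℂ) := by
    simpa [mul_comm] using ((hasDerivAt_id ((θ:ℂ))).const_mul (-(Complex.I * m))).cexp
  have h2 := h.comp_ofReal
  simpa [neg_mul, mul_assoc] using h2

noncomputable def uC (δ : ℝ) (θ : ℝ) : ℂ := ((uFun δ θ : ℝ) : ℂ)

lemma uC_continuous (δ : ℝ) (hδ : 0 < δ) : Continuous (uC δ) :=
  Complex.continuous_ofReal.comp (uFun_continuous δ hδ)

lemma expC_continuous (m : ℂ) : Continuous (fun θ : ℝ => Complex.exp (-(Complex.I * m * θ))) := by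
  continuity

lemma recurrence (δ : ℝ) (hδ : 0 < δ) (m : ℂ) :
    ((δ:ℂ) + m + 1) * (∫ θ in (0:ℝ)..(2*Real.pi), uC δ θ * Complex.exp (-(Complex.I * (m+1) * θ)))
      = (m - (δ:ℂ)) * ∫ θ in (0:ℝ)..(2*Real.pi), uC δ θ * Complex.exp (-(Complex.I * m * θ)) := by
  set E1 : ℝ → ℂ := fun θ => Complex.exp (-(Complex.I * m * θ)) with hE1
  set E2 : ℝ → ℂ := fun θ => Complex.exp (-(Complex.I * (m+1) * θ)) with hE2
  set G : ℝ → ℂ := fun θ => uC δ θ * (E1 θ - E2 θ) with hG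
  set g' : ℝ → ℂ := fun θ =>
    Complex.I * ((δ:ℂ) - m) * (uC δ θ * E1 θ) + Complex.I * ((δ:ℂ) + m + 1) * (uC δ θ * E2 θ)
    with hg'
  have hcont1 : Continuous fun θ => uC δ θ * E1 θ := (uC_continuous δ hδ).mul (expC_continuous m)
  have hcont2 : Continuous fun θ => uC δ θ * E2 θ := (uC_continuous δ hδ).mul (expC_continuous (m+1))
  have hderiv : ∀ x ∈ Set.Ioo (0:ℝ) (2*Real.pi), HasDerivAt G (g' x) x := by
    intro x hx
    obtain ⟨hx1, hx2⟩ := hx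
    have hvpos := two_sub_cos_pos hx1 hx2
    have hu := (uFun_hasDerivAt δ hx1 hx2).ofReal_comp
    have hd1 := expDeriv m x
    have hd2 := expDeriv (m+1) x
    have hprod := hu.mul (hd1.sub hd2)
    refine hprod.congr_deriv (Eq.symm ?_)
    have hkey := key_exp_id x
    have hF : Complex.exp (-(Complex.I * (m+1) * x))
        = Complex.exp (-(Complex.I * m * x)) * Complex.exp (-(Complex.I * x)) := by
      rw [← Complex.exp_add]; ring_nf
    have huu : uFun δ x = (2 - 2 * Real.cos x) ^ (δ-1) * (2 - 2 * Real.cos x) := by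
      rw [uFun, ← Real.rpow_add_one hvpos.ne']; norm_num
    simp only [hg', uC, hE1, hE2, huu, hF, Complex.ofReal_mul, Complex.ofReal_sub,
      Complex.ofReal_ofNat, Pi.sub_apply]
    linear_combination (-(δ:ℂ) * (((2 - 2 * Real.cos x) ^ (δ-1) : ℝ) : ℂ)
      * Complex.exp (-(Complex.I * m * x))) * hkey
  have hintg' : IntervalIntegrable g' volume 0 (2*Real.pi) := by
    apply Continuous.intervalIntegrable
    exact (continuous_const.mul hcont1).add (continuous_const.mul hcont2)
  have hzero : uFun δ 0 = 0 ∧ uFun δ (2*Real.pi) = 0 := by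
    constructor <;> simp [uFun, Real.cos_two_pi, Real.zero_rpow hδ.ne']
  have hftc : ∫ θ in (0:ℝ)..(2*Real.pi), g' θ = G (2*Real.pi) - G 0 := by
    apply integral_eq_sub_of_hasDeriv_right_of_le (by positivity)
    · exact (((uC_continuous δ hδ).mul ((expC_continuous m).sub (expC_continuous (m+1)))).continuousOn)
    · exact fun x hx => (hderiv x hx).hasDerivWithinAt
    · exact hintg'
  have hG0 : G 0 = 0 := by simp [hG, uC, hzero.1]
  have hG2 : G (2*Real.pi) = 0 := by simp [hG, uC, hzero.2]
  have hsplit : ∫ θ in (0:ℝ)..(2*Real.pi), g' θ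
      = Complex.I * ((δ:ℂ) - m) * (∫ θ in (0:ℝ)..(2*Real.pi), uC δ θ * E1 θ)
        + Complex.I * ((δ:ℂ) + m + 1) * (∫ θ in (0:ℝ)..(2*Real.pi), uC δ θ * E2 θ) := by
    rw [hg']
    rw [integral_add ((hcont1.intervalIntegrable _ _).const_mul _)
      ((hcont2.intervalIntegrable _ _).const_mul _), intervalIntegral.integral_const_mul, intervalIntegral.integral_const_mul]
  have h0 : Complex.I * ((δ:ℂ) - m) * (∫ θ in (0:ℝ)..(2*Real.pi), uC δ θ * E1 θ)
        + Complex.I * ((δ:ℂ) + m + 1) * (∫ θ in (0:ℝ)..(2*Real.pi), uC δ θ * E2 θ) = 0 := by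
    rw [← hsplit, hftc, hG0, hG2]; ring
  set A := ∫ θ in (0:ℝ)..(2*Real.pi), uC δ θ * E1 θ
  set B := ∫ θ in (0:ℝ)..(2*Real.pi), uC δ θ * E2 θ
  linear_combination (-Complex.I) * h0 + (((δ:ℂ) - m) * A + ((δ:ℂ) + m + 1) * B) * Complex.I_sq
noncomputable def gFun (δ : ℝ) (y : ℝ) : ℝ :=
  (4:ℝ)^δ * y^(δ-1/2) * (1-y)^(-(1/2) : ℝ)

lemma phi_img : (fun x : ℝ => Real.sin (x/2)^2) '' (Set.Ioo 0 Real.pi) = Set.Ioo (0:ℝ) 1 := by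
  ext y
  constructor
  · rintro ⟨x, ⟨hx1, hx2⟩, rfl⟩
    have hs : 0 < Real.sin (x/2) := Real.sin_pos_of_pos_of_lt_pi (by linarith) (by linarith [Real.pi_pos])
    have hc : 0 < Real.cos (x/2) := Real.cos_pos_of_mem_Ioo ⟨by linarith [Real.pi_pos], by linarith⟩
    have := Real.sin_sq_add_cos_sq (x/2)
    exact ⟨by positivity, by nlinarith⟩
  · rintro ⟨hy1, hy2⟩
    have hs0 : (0:ℝ) ≤ Real.sqrt y := Real.sqrt_nonneg y
    have hs1 : Real.sqrt y ≤ 1 := by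
      rw [show (1:ℝ) = Real.sqrt 1 by simp]; exact Real.sqrt_le_sqrt hy2.le
    have hs1' : Real.sqrt y < 1 := by
      rw [show (1:ℝ) = Real.sqrt 1 by simp]; exact Real.sqrt_lt_sqrt hy1.le hy2
    refine ⟨2 * Real.arcsin (Real.sqrt y), ⟨?_, ?_⟩, ?_⟩
    · have : 0 < Real.arcsin (Real.sqrt y) := Real.arcsin_pos.mpr (Real.sqrt_pos.mpr hy1)
      linarith
    · have : Real.arcsin (Real.sqrt y) < Real.pi / 2 := Real.arcsin_lt_pi_div_two.mpr hs1'
      linarith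
    · show Real.sin (2 * Real.arcsin (Real.sqrt y) / 2) ^ 2 = y
      rw [show 2 * Real.arcsin (Real.sqrt y) / 2 = Real.arcsin (Real.sqrt y) by ring,
        Real.sin_arcsin (by linarith) hs1, Real.sq_sqrt hy1.le]

lemma phi_inj : Set.InjOn (fun x : ℝ => Real.sin (x/2)^2) (Set.Ioo 0 Real.pi) := by
  intro a ⟨ha1, ha2⟩ b ⟨hb1, hb2⟩ hab
  have hsa : 0 < Real.sin (a/2) := Real.sin_pos_of_pos_of_lt_pi (by linarith) (by linarith [Real.pi_pos])
  have hsb : 0 < Real.sin (b/2) := Real.sin_pos_of_pos_of_lt_pi (by linarith) (by linarith [Real.pi_pos])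
  have hs : Real.sin (a/2) = Real.sin (b/2) := by
    rw [← Real.sqrt_sq hsa.le, ← Real.sqrt_sq hsb.le]
    exact congrArg Real.sqrt hab
  have := Real.injOn_sin ⟨by linarith [Real.pi_pos], by linarith⟩
    ⟨by linarith [Real.pi_pos], by linarith⟩ hs
  linarith

lemma phi_deriv (x : ℝ) :
    HasDerivAt (fun x : ℝ => Real.sin (x/2)^2) (Real.sin (x/2) * Real.cos (x/2)) x := by
  have h1 : HasDerivAt (fun x : ℝ => x/2) (1/2) x := (hasDerivAt_id x).div_const 2
  have h2 := (Real.hasDerivAt_sin (x/2)).comp x h1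
  have h3 := h2.pow 2
  refine h3.congr_deriv (Eq.symm ?_)
  simp [Function.comp]
  ring

lemma subst_eq (δ : ℝ) :
    ∫ y in Set.Ioo (0:ℝ) 1, gFun δ y
      = ∫ x in Set.Ioo 0 Real.pi, uFun δ x := by
  rw [← phi_img]
  rw [integral_image_eq_integral_abs_deriv_smul measurableSet_Ioo
    (fun x _ => (phi_deriv x).hasDerivWithinAt) phi_inj]
  apply setIntegral_congr_fun measurableSet_Ioo
  intro x ⟨hx1, hx2⟩
  have hs : 0 < Real.sin (x/2) := Real.sin_pos_of_pos_of_lt_pi (by linarith) (by linarith [Real.pi_pos])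
  have hc : 0 < Real.cos (x/2) := Real.cos_pos_of_mem_Ioo ⟨by linarith [Real.pi_pos], by linarith⟩
  have hsc := Real.sin_sq_add_cos_sq (x/2)
  simp only [smul_eq_mul, gFun]
  rw [abs_of_pos (by positivity)]
  rw [show (1 - Real.sin (x/2)^2) = Real.cos (x/2)^2 by linarith]
  rw [show Real.sin (x/2)^2 = Real.sin (x/2) ^ (2:ℝ) by rw [Real.rpow_two],
    show Real.cos (x/2)^2 = Real.cos (x/2) ^ (2:ℝ) by rw [Real.rpow_two],
    ← Real.rpow_mul hs.le, ← Real.rpow_mul hc.le, uFun, two_sub_cos_eq,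
    show (4:ℝ) * Real.sin (x/2)^2 = 4 * Real.sin (x/2) ^ (2:ℝ) by rw [Real.rpow_two],
    Real.mul_rpow (by norm_num) (by positivity), ← Real.rpow_mul hs.le]
  rw [show (2:ℝ) * (δ - 1/2) = 2*δ - 1 by ring, show (2:ℝ) * (-(1/2)) = -1 by ring,
    Real.rpow_neg_one]
  rw [show (2:ℝ)*δ = 1 + (2*δ-1) by ring, Real.rpow_add hs, Real.rpow_one]
  field_simp
  ring

lemma gInt_aux (δ : ℝ) (hδ : 0 < δ) :
    Real.Gamma (δ+1/2) * Real.Gamma (1/2)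
      = Real.Gamma (δ+1) * ∫ y in Set.Ioo (0:ℝ) 1, y^(δ-1/2) * (1-y)^(-(1/2) : ℝ) := by
  have hbeta : Complex.Gamma (δ+1/2) * Complex.Gamma (1/2)
      = Complex.Gamma ((δ:ℂ)+1/2+1/2) * Complex.betaIntegral ((δ:ℂ)+1/2) (1/2) := by
    apply Complex.Gamma_mul_Gamma_eq_betaIntegral
    · simp; positivity
    · norm_num
  have hval : Complex.betaIntegral ((δ:ℂ)+1/2) (1/2)
      = ((∫ y in Set.Ioo (0:ℝ) 1, y^(δ-1/2) * (1-y)^(-(1/2) : ℝ) : ℝ) : ℂ) := by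
    rw [Complex.betaIntegral, intervalIntegral.integral_of_le zero_le_one,
      MeasureTheory.integral_Ioc_eq_integral_Ioo]
    have hcong : ∫ (t : ℝ) in Set.Ioo (0:ℝ) 1, (t:ℂ) ^ ((δ:ℂ)+1/2-1) * ((1:ℂ)-t) ^ ((1/2:ℂ)-1)
        = ∫ (t : ℝ) in Set.Ioo (0:ℝ) 1, ((t^(δ-1/2) * (1-t)^(-(1/2) : ℝ) : ℝ) : ℂ) := by
      apply setIntegral_congr_fun measurableSet_Ioo
      intro y ⟨hy1, hy2⟩
      show (y:ℂ) ^ ((δ:ℂ)+1/2-1) * ((1:ℂ)-y) ^ ((1/2:ℂ)-1) = _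
      rw [show ((δ:ℂ)+1/2-1) = ((δ-1/2 : ℝ):ℂ) by push_cast; ring,
        show ((1/2:ℂ)-1) = ((-(1/2) : ℝ):ℂ) by push_cast; ring,
        show ((1:ℂ) - (y:ℂ)) = ((1 - y : ℝ):ℂ) by push_cast; ring,
        ← Complex.ofReal_cpow hy1.le, ← Complex.ofReal_cpow (by linarith : (0:ℝ) ≤ 1 - y)]
      push_cast
      ring
    rw [hcong]
    exact _root_.integral_ofReal (𝕜 := ℂ)
  rw [hval] at hbeta
  have : ((δ:ℂ)+1/2+1/2) = ((δ+1 : ℝ) : ℂ) := by push_cast; ring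
  rw [this] at hbeta
  rw [show ((δ:ℂ)+1/2) = ((δ+1/2 : ℝ):ℂ) by push_cast; ring, show ((1:ℂ)/2) = ((1/2 : ℝ):ℂ) by push_cast; ring]
    at hbeta
  rw [Complex.Gamma_ofReal, Complex.Gamma_ofReal, Complex.Gamma_ofReal] at hbeta
  exact_mod_cast hbeta

lemma base_integral (δ : ℝ) (hδ : 0 < δ) :
    ∫ θ in (0:ℝ)..(2*Real.pi), uFun δ θ
      = 2*Real.pi * (Real.Gamma (1+2*δ) / Real.Gamma (1+δ)^2) := by
  have hcont := uFun_continuous δ hδ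
  have hsplit : ∫ θ in (0:ℝ)..(2*Real.pi), uFun δ θ
      = (∫ θ in (0:ℝ)..Real.pi, uFun δ θ) + ∫ θ in Real.pi..(2*Real.pi), uFun δ θ :=
    (integral_add_adjacent_intervals (hcont.intervalIntegrable _ _)
      (hcont.intervalIntegrable _ _)).symm
  have hsym : ∫ θ in Real.pi..(2*Real.pi), uFun δ θ = ∫ θ in (0:ℝ)..Real.pi, uFun δ θ := by
    have h := intervalIntegral.integral_comp_sub_left (a := (0:ℝ)) (b := Real.pi)
      (fun x => uFun δ x) (2*Real.pi)
    rw [show 2*Real.pi - Real.pi = Real.pi by ring, sub_zero] at h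
    rw [← h]
    apply integral_congr
    intro x _
    show (2 - 2 * Real.cos (2*Real.pi - x)) ^ δ = (2 - 2 * Real.cos x) ^ δ
    rw [show Real.cos (2*Real.pi - x) = Real.cos x by
      rw [Real.cos_sub, Real.cos_two_pi, Real.sin_two_pi]; ring]
  have hIoo : ∫ θ in (0:ℝ)..Real.pi, uFun δ θ = ∫ x in Set.Ioo (0:ℝ) Real.pi, uFun δ x := by
    rw [integral_of_le Real.pi_pos.le, MeasureTheory.integral_Ioc_eq_integral_Ioo]
  have hgint : ∫ y in Set.Ioo (0:ℝ) 1, gFun δ y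
      = (4:ℝ)^δ * (Real.Gamma (δ+1/2) * Real.Gamma (1/2) / Real.Gamma (δ+1)) := by
    have h := gInt_aux δ hδ
    have hΓ : Real.Gamma (δ+1) ≠ 0 := (Real.Gamma_pos_of_pos (by linarith)).ne'
    have : ∫ y in Set.Ioo (0:ℝ) 1, gFun δ y
        = (4:ℝ)^δ * ∫ y in Set.Ioo (0:ℝ) 1, y^(δ-1/2) * (1-y)^(-(1/2) : ℝ) := by
      simp only [gFun, mul_assoc]
      exact MeasureTheory.integral_const_mul _ _
    rw [this]
    congr 1
    rw [eq_div_iff hΓ]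
    linear_combination -h
  have hdup := Real.Gamma_mul_Gamma_add_half (δ+1/2)
  rw [show δ+1/2+1/2 = δ+1 by ring, show 2*(δ+1/2) = 2*δ+1 by ring] at hdup
  rw [show (1:ℝ)-(2*δ+1) = -(2*δ) by ring] at hdup
  have h4 : (4:ℝ)^δ = (2:ℝ)^(2*δ) := by
    rw [show (4:ℝ) = (2:ℝ)^(2:ℕ) by norm_num, ← Real.rpow_natCast 2 2,
      ← Real.rpow_mul (by norm_num)]
    norm_num
  have h22 : (2:ℝ)^(2*δ) * (2:ℝ)^(-(2*δ)) = 1 := by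
    rw [← Real.rpow_add (by norm_num)]; norm_num
  have hsq : Real.sqrt Real.pi * Real.sqrt Real.pi = Real.pi :=
    Real.mul_self_sqrt Real.pi_pos.le
  have hΓ1 : (0:ℝ) < Real.Gamma (δ+1) := Real.Gamma_pos_of_pos (by linarith)
  rw [hsplit, hsym, hIoo, ← subst_eq δ, hgint, Real.Gamma_one_half_eq]
  rw [show (1:ℝ)+2*δ = 2*δ+1 by ring, show (1:ℝ)+δ = δ+1 by ring]
  have hΓhalf : Real.Gamma (δ+1/2)
      = Real.Gamma (2*δ+1) * 2^(-(2*δ)) * Real.sqrt Real.pi / Real.Gamma (δ+1) := by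
    rw [eq_div_iff hΓ1.ne']; linear_combination hdup
  rw [h4, hΓhalf]
  field_simp
  linear_combination (2*(Real.sqrt Real.pi*Real.sqrt Real.pi)) * h22
    + 2 * hsq


lemma Jval (δ : ℝ) (hδ : 0 < δ) (k : ℕ) :
    (∫ θ in (0:ℝ)..(2*Real.pi), uC δ θ * Complex.exp (-(Complex.I * (k:ℂ) * θ)))
      = ((2*Real.pi * (Real.Gamma (1+2*δ) / Real.Gamma (1+δ)^2)
          * (risingFac (-δ) k / risingFac (1+δ) k) : ℝ) : ℂ) := by
  induction k with
  | zero =>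
    simp only [Nat.cast_zero, mul_zero, zero_mul, neg_zero, Complex.exp_zero, mul_one,
      risingFac, Finset.range_zero, Finset.prod_empty]
    rw [show (fun θ:ℝ => uC δ θ) = (fun θ:ℝ => ((uFun δ θ : ℝ):ℂ)) from rfl,
      intervalIntegral.integral_ofReal, base_integral δ hδ]
    norm_num
  | succ n ih =>
    have hrec := recurrence δ hδ (n:ℂ)
    rw [ih] at hrec
    have h0 : (0:ℝ) < δ + n + 1 := by positivity
    have hne : ((δ:ℂ) + (n:ℂ) + 1) ≠ 0 := by
      rw [show ((δ:ℂ) + (n:ℂ) + 1) = ((δ + n + 1 : ℝ) : ℂ) by push_cast; ring]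
      exact_mod_cast h0.ne'
    apply mul_left_cancel₀ hne
    rw [show (((n+1 : ℕ)):ℂ) = (n:ℂ)+1 by push_cast; ring, hrec]
    have hrfd : risingFac (1+δ) n ≠ 0 := by
      apply ne_of_gt
      apply Finset.prod_pos
      intro j _
      positivity
    have hrfd1 : (1+δ+(n:ℝ)) ≠ 0 := by positivity
    rw [show risingFac (-δ) (n+1) = risingFac (-δ) n * (-δ + n) from Finset.prod_range_succ _ _,
      show risingFac (1+δ) (n+1) = risingFac (1+δ) n * (1+δ+n) from Finset.prod_range_succ _ _,
      show ((n:ℂ) - δ) = (((n:ℝ) - δ : ℝ):ℂ) by push_cast; ring,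
      show ((δ:ℂ)+(n:ℂ)+1) = ((δ+(n:ℝ)+1 : ℝ):ℂ) by push_cast; ring,
      ← Complex.ofReal_mul, ← Complex.ofReal_mul, Complex.ofReal_inj]
    field_simp
    ring

theorem stmt3 (δ : ℝ) (hδ : 0 < δ) (k : ℕ) :
    (1 / (2 * Real.pi)) *
        ∫ θ in (0 : ℝ)..(2 * Real.pi), hDens δ θ * Complex.exp (-(Complex.I * k * θ))
      = ((1 / (2 * Real.pi)) * (risingFac (-δ) k / risingFac (1 + δ) k) : ℝ) := by
  have hΓ2 : Real.Gamma (1+2*δ) ≠ 0 := (Real.Gamma_pos_of_pos (by linarith)).ne'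
  have hΓ1 : Real.Gamma (1+δ) ≠ 0 := (Real.Gamma_pos_of_pos (by linarith)).ne'
  have hrfd : risingFac (1+δ) k ≠ 0 := by
    apply ne_of_gt
    apply Finset.prod_pos
    intro j _
    positivity
  have hcongr : (∫ θ in (0:ℝ)..(2*Real.pi), hDens δ θ * Complex.exp (-(Complex.I * k * θ)))
      = (1 / (2 * (Real.pi:ℂ)) * (((Real.Gamma (1+δ):ℂ))^2 / ((Real.Gamma (1+2*δ):ℂ))))
        * ∫ θ in (0:ℝ)..(2*Real.pi), uC δ θ * Complex.exp (-(Complex.I * (k:ℂ) * θ)) := by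
    rw [← intervalIntegral.integral_const_mul]
    apply integral_congr
    intro θ _
    simp only [hDens, uC]
    rw [← stepA δ θ]
    ring
  rw [hcongr, Jval δ hδ k,
    show (1 / (2 * (Real.pi:ℂ))) = ((1/(2*Real.pi) : ℝ):ℂ) by push_cast; ring,
    show (((Real.Gamma (1+δ):ℂ))^2 / ((Real.Gamma (1+2*δ):ℂ)))
      = ((Real.Gamma (1+δ)^2 / Real.Gamma (1+2*δ) : ℝ):ℂ) by push_cast; ring,
    ← Complex.ofReal_mul, ← Complex.ofReal_mul, ← Complex.ofReal_mul, Complex.ofReal_inj]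
  field_simp
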